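/- Let κ be a regular uncountable cardinal and U a normal ultrafilter on κ. Then 𝔱(U) ≤ 𝔟_κ, where 𝔱(U) is the least length of a ⊆*-decreasing sequence in U with no ⊆*-lower bound in U. -/

import Mathlib

open Cardinal Set

namespace PaperFormal

/-- `A` is unbounded in `κ` (as a set of ordinals below `κ`). -/
def UnboundedIn (κ : Ordinal.{0}) (A : Set Ordinal) : Prop :=
  ∀ α < κ, ∃ β ∈ A, α ≤ β

/-- `A ⊆* B`: almost inclusion (mod bounded) below `κ`. -/
def AlmostSub (κ : Ordinal.{0}) (A B : Set Ordinal) : Prop :=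
  ∃ α < κ, ∀ β ∈ A, α ≤ β → β ∈ B

/-- `C` is closed in `κ`. -/
def ClosedIn (κ : Ordinal.{0}) (C : Set Ordinal) : Prop :=
  ∀ α, α < κ → α ≠ 0 → (∀ β < α, (C ∩ Set.Ioo β α).Nonempty) → α ∈ C

/-- `C` is a club (closed unbounded set) in `κ`. -/
def IsClub (κ : Ordinal.{0}) (C : Set Ordinal) : Prop :=
  C ⊆ Set.Iio κ ∧ UnboundedIn κ C ∧ ClosedIn κ C

/-- `f` maps `κ` into `κ`. -/
def FunOn (κ : Ordinal.{0}) (f : Ordinal → Ordinal) : Prop :=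
  ∀ β < κ, f β < κ

/-- almost everywhere domination `f ≤* g` on `κ`. -/
def LeStar (κ : Ordinal.{0}) (f g : Ordinal → Ordinal) : Prop :=
  ∃ α < κ, ∀ β, α ≤ β → β < κ → f β ≤ g β

def UnboundedFunFam (κ : Ordinal.{0}) (𝒜 : Set (Ordinal → Ordinal)) : Prop :=
  (∀ f ∈ 𝒜, FunOn κ f) ∧ ∀ g, FunOn κ g → ∃ f ∈ 𝒜, ¬ LeStar κ f g

def DominatingFunFam (κ : Ordinal.{0}) (𝒜 : Set (Ordinal → Ordinal)) : Prop :=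
  (∀ f ∈ 𝒜, FunOn κ f) ∧ ∀ g, FunOn κ g → ∃ f ∈ 𝒜, LeStar κ g f

/-- the generalized bounding number `𝔟_κ`. -/
noncomputable def bNum (κ : Ordinal.{0}) : Cardinal :=
  sInf { μ : Cardinal.{0} | ∃ 𝒜, UnboundedFunFam κ 𝒜 ∧ #𝒜 = Cardinal.lift.{1} μ }

/-- the generalized dominating number `𝔡_κ`. -/
noncomputable def dNum (κ : Ordinal.{0}) : Cardinal :=
  sInf { μ : Cardinal.{0} | ∃ 𝒜, DominatingFunFam κ 𝒜 ∧ #𝒜 = Cardinal.lift.{1} μ }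

/-- a (proper) filter on `κ`. -/
structure IsKFilter (κ : Ordinal.{0}) (F : Set (Set Ordinal)) : Prop where
  subset : ∀ A ∈ F, A ⊆ Set.Iio κ
  univ_mem : Set.Iio κ ∈ F
  upward : ∀ A ∈ F, ∀ B, B ⊆ Set.Iio κ → A ⊆ B → B ∈ F
  inter : ∀ A ∈ F, ∀ B ∈ F, A ∩ B ∈ F
  proper : ∅ ∉ F

/-- an ultrafilter on `κ`. -/
structure IsKUltrafilter (κ : Ordinal.{0}) (U : Set (Set Ordinal)) extends IsKFilter κ U : Prop where
  decide : ∀ A, A ⊆ Set.Iio κ → A ∈ U ∨ (Set.Iio κ \ A) ∈ U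

/-- uniformity: every member is unbounded (equivalently, for regular `κ`, of size `κ`). -/
def Uniform (κ : Ordinal.{0}) (F : Set (Set Ordinal)) : Prop :=
  ∀ A ∈ F, UnboundedIn κ A

/-- `κ`-completeness. -/
def KComplete (κ : Ordinal.{0}) (F : Set (Set Ordinal)) : Prop :=
  ∀ s : Set (Set Ordinal), s ⊆ F → s.Nonempty → #s < Cardinal.lift.{1} κ.card → ⋂₀ s ∈ F

/-- closure under diagonal intersections. -/
def DiagClosed (κ : Ordinal.{0}) (F : Set (Set Ordinal)) : Prop :=
  ∀ A : Ordinal → Set Ordinal, (∀ i < κ, A i ∈ F) →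
    {β | β < κ ∧ ∀ i < β, β ∈ A i} ∈ F

/-- a normal ultrafilter on `κ`: `κ`-complete, contains all clubs, closed under
diagonal intersections. -/
def NormalUF (κ : Ordinal.{0}) (U : Set (Set Ordinal)) : Prop :=
  IsKUltrafilter κ U ∧ Uniform κ U ∧ KComplete κ U ∧
    (∀ C, IsClub κ C → C ∈ U) ∧ DiagClosed κ U

/-- `ℬ` is a `⊆*`-base for `F`. -/
def IsBase (κ : Ordinal.{0}) (F ℬ : Set (Set Ordinal)) : Prop :=
  ℬ ⊆ F ∧ ∀ A ∈ F, ∃ B ∈ ℬ, AlmostSub κ B A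

/-- the character of a filter. -/
noncomputable def chNum (κ : Ordinal.{0}) (F : Set (Set Ordinal)) : Cardinal :=
  sInf { μ : Cardinal.{0} | ∃ ℬ, IsBase κ F ℬ ∧ #ℬ = Cardinal.lift.{1} μ }

/-- there is a `⊆*`-decreasing `λ`-sequence in `F` with no `⊆*`-lower bound in `F`. -/
def HasTower (κ : Ordinal.{0}) (F : Set (Set Ordinal)) (lam : Cardinal) : Prop :=
  ∃ S : Ordinal → Set Ordinal, (∀ i < lam.ord, S i ∈ F) ∧
    (∀ i j, i < j → j < lam.ord → AlmostSub κ (S j) (S i)) ∧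
    ¬ ∃ Y ∈ F, ∀ i < lam.ord, AlmostSub κ Y (S i)

/-- the depth `𝔱(F)` of a filter. -/
noncomputable def tNum (κ : Ordinal.{0}) (F : Set (Set Ordinal)) : Cardinal :=
  sInf { μ : Cardinal.{0} | μ.IsRegular ∧ HasTower κ F μ }

/-- the ultrafilter number `𝔲_κ`. -/
noncomputable def uNum (κ : Ordinal.{0}) : Cardinal :=
  sInf { μ : Cardinal.{0} | ∃ U, IsKUltrafilter κ U ∧ Uniform κ U ∧ chNum κ U = μ }

/-- the complete ultrafilter number `𝔲^com_κ`. -/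
noncomputable def uComNum (κ : Ordinal.{0}) : Cardinal :=
  sInf { μ : Cardinal.{0} | ∃ U, IsKUltrafilter κ U ∧ Uniform κ U ∧ KComplete κ U ∧ chNum κ U = μ }

/-- `U` is a simple `P_λ`-point: a uniform ultrafilter with a `⊆*`-decreasing
generating sequence of length `λ`. -/
def SimplePPoint (κ : Ordinal.{0}) (lam : Cardinal) (U : Set (Set Ordinal)) : Prop :=
  IsKUltrafilter κ U ∧ Uniform κ U ∧
    ∃ S : Ordinal → Set Ordinal, (∀ i < lam.ord, S i ∈ U) ∧
      (∀ i j, i < j → j < lam.ord → AlmostSub κ (S j) (S i)) ∧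
      ∀ A ∈ U, ∃ i < lam.ord, AlmostSub κ (S i) A

/-- a `⊆*`-decreasing generating sequence of length `λ` for a filter `F`. -/
def SimplePFilter (κ : Ordinal.{0}) (lam : Cardinal) (F : Set (Set Ordinal)) : Prop :=
  ∃ S : Ordinal → Set Ordinal, (∀ i < lam.ord, S i ∈ F) ∧
    (∀ i j, i < j → j < lam.ord → AlmostSub κ (S j) (S i)) ∧
    ∀ A ∈ F, ∃ i < lam.ord, AlmostSub κ (S i) A

/-- `ℬ` is a `π`-base for `U`: unbounded sets, almost contained in members of `U`. -/
def IsPiBase (κ : Ordinal.{0}) (U ℬ : Set (Set Ordinal)) : Prop :=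
  (∀ B ∈ ℬ, B ⊆ Set.Iio κ ∧ UnboundedIn κ B) ∧ ∀ A ∈ U, ∃ B ∈ ℬ, AlmostSub κ B A

/-- the `π`-character `πch(U)`. -/
noncomputable def piChNum (κ : Ordinal.{0}) (U : Set (Set Ordinal)) : Cardinal :=
  sInf { μ : Cardinal.{0} | ∃ ℬ, IsPiBase κ U ℬ ∧ #ℬ = Cardinal.lift.{1} μ }

/-- `Y` is a pseudo-intersection of the family `𝒜`. -/
def IsPseudoInter (κ : Ordinal.{0}) (𝒜 : Set (Set Ordinal)) (Y : Set Ordinal) : Prop :=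
  Y ⊆ Set.Iio κ ∧ UnboundedIn κ Y ∧ ∀ A ∈ 𝒜, AlmostSub κ Y A

/-- `π𝔭(U)`: the least size of a subfamily of `U` with no pseudo-intersection. -/
noncomputable def piPNum (κ : Ordinal.{0}) (U : Set (Set Ordinal)) : Cardinal :=
  sInf { μ : Cardinal.{0} | ∃ 𝒜, 𝒜 ⊆ U ∧ #𝒜 = Cardinal.lift.{1} μ ∧ ¬ ∃ Y, IsPseudoInter κ 𝒜 Y }

/-- a `⊆*`-decreasing `λ`-sequence in `U` unbounded in `([κ]^κ, ⊇*)`. -/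
def HasPiTower (κ : Ordinal.{0}) (U : Set (Set Ordinal)) (lam : Cardinal) : Prop :=
  ∃ S : Ordinal → Set Ordinal, (∀ i < lam.ord, S i ∈ U) ∧
    (∀ i j, i < j → j < lam.ord → AlmostSub κ (S j) (S i)) ∧
    ¬ ∃ Y, Y ⊆ Set.Iio κ ∧ UnboundedIn κ Y ∧ ∀ i < lam.ord, AlmostSub κ Y (S i)

/-- `π𝔱(U)`. -/
noncomputable def piTNum (κ : Ordinal.{0}) (U : Set (Set Ordinal)) : Cardinal :=
  sInf { μ : Cardinal.{0} | μ.IsRegular ∧ HasPiTower κ U μ }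

/-- `A` splits `B`. -/
def Splits (κ : Ordinal.{0}) (A B : Set Ordinal) : Prop :=
  UnboundedIn κ (B ∩ A) ∧ UnboundedIn κ (B \ A)

/-- the splitting number `𝔰_κ`. -/
noncomputable def sNum (κ : Ordinal.{0}) : Cardinal :=
  sInf { μ : Cardinal.{0} | ∃ 𝒜 : Set (Set Ordinal), (∀ A ∈ 𝒜, A ⊆ Set.Iio κ) ∧
    (∀ X, X ⊆ Set.Iio κ → UnboundedIn κ X → ∃ A ∈ 𝒜, Splits κ A X) ∧ #𝒜 = Cardinal.lift.{1} μ }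

/-- the reaping number `𝔯_κ`. -/
noncomputable def rNum (κ : Ordinal.{0}) : Cardinal :=
  sInf { μ : Cardinal.{0} | ∃ 𝒜 : Set (Set Ordinal), (∀ A ∈ 𝒜, A ⊆ Set.Iio κ ∧ UnboundedIn κ A) ∧
    (¬ ∃ X, X ⊆ Set.Iio κ ∧ ∀ A ∈ 𝒜, Splits κ X A) ∧ #𝒜 = Cardinal.lift.{1} μ }

/-- `f` is almost one-to-one modulo `U`: bounded-to-one on a set in `U`. -/
def AlmostInjMod (κ : Ordinal.{0}) (U : Set (Set Ordinal)) (f : Ordinal → Ordinal) : Prop :=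
  ∃ X ∈ U, ∀ γ < κ, ∃ α < κ, ∀ β ∈ X, f β = γ → β < α

/-- the pushforward `f_*(U)`. -/
def PushFwd (κ : Ordinal.{0}) (f : Ordinal → Ordinal) (U : Set (Set Ordinal)) :
    Set (Set Ordinal) :=
  { A | A ⊆ Set.Iio κ ∧ (Set.Iio κ ∩ f ⁻¹' A) ∈ U }

/-- countable completeness. -/
def CountablyComplete (U : Set (Set Ordinal)) : Prop :=
  ∀ s : Set (Set Ordinal), s ⊆ U → s.Countable → s.Nonempty → ⋂₀ s ∈ U



section Stmt5Aux

open Ordinal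

lemma leStar_trans {K : Ordinal.{0}} {f g h : Ordinal → Ordinal}
    (h1 : LeStar K f g) (h2 : LeStar K g h) : LeStar K f h := by
  obtain ⟨a, ha, h1⟩ := h1
  obtain ⟨c, hc, h2⟩ := h2
  refine ⟨max a c, max_lt ha hc, fun β hβ hβK => ?_⟩
  exact (h1 β (le_trans (le_max_left _ _) hβ) hβK).trans
    (h2 β (le_trans (le_max_right _ _) hβ) hβK)

lemma leStar_refl {K : Ordinal.{0}} (hK : 0 < K) (f : Ordinal → Ordinal) : LeStar K f f :=
  ⟨0, hK, fun _ _ _ => le_rfl⟩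

lemma tail_mem {K : Ordinal.{0}} {U : Set (Set Ordinal)} (hU : NormalUF K U)
    (hK : Order.IsSuccLimit K) {δ : Ordinal} (hδ : δ < K) : Set.Iio K ∩ Set.Ioi δ ∈ U := by
  rcases hU.1.decide (Set.Iio K ∩ Set.Ioi δ) Set.inter_subset_left with h | h
  · exact h
  · exfalso
    obtain ⟨β, hβ, hle⟩ := hU.2.1 _ h (Order.succ δ) (hK.succ_lt hδ)
    have hβδ : β ≤ δ := by
      by_contra hcon
      exact hβ.2 ⟨hβ.1, lt_of_not_ge hcon⟩
    exact ((Order.succ_le_iff.mp hle).not_ge hβδ).elim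

lemma sup_fun_lt {κ : Cardinal.{0}} (hreg : κ.IsRegular) {f : Ordinal → Ordinal}
    (hf : FunOn κ.ord f) {θ : Ordinal} (hθ : θ < κ.ord) :
    ∃ δ < κ.ord, ∀ γ < θ, f γ < δ := by
  have hKlim : Order.IsSuccLimit κ.ord := Cardinal.isSuccLimit_ord hreg.aleph0_le
  set g : θ.ToType → Ordinal := fun x => Order.succ (f ((Ordinal.ToType.mk (o := θ)).symm x))
    with hg
  have hlt : ∀ x, g x < κ.ord := by
    intro x
    have h1 : ((Ordinal.ToType.mk (o := θ)).symm x : Ordinal) < θ :=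
      ((Ordinal.ToType.mk (o := θ)).symm x).2
    exact hKlim.succ_lt (hf _ (h1.trans hθ))
  have hsup : (⨆ x, g x) < κ.ord := by
    apply Ordinal.iSup_lt_ord _ hlt
    rw [Cardinal.mk_toType, hreg.cof_eq]
    exact Cardinal.lt_ord.mp hθ
  refine ⟨⨆ x, g x, hsup, fun γ hγ => ?_⟩
  have hx : g ((Ordinal.ToType.mk (o := θ)) ⟨γ, hγ⟩) = Order.succ (f γ) := by
    rw [hg]; simp
  calc f γ < Order.succ (f γ) := Order.lt_succ _
    _ ≤ ⨆ x, g x := hx ▸ le_ciSup (Ordinal.bddAbove_range g) _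

lemma exists_enum {𝒜 : Set (Ordinal → Ordinal)} {μ : Cardinal.{0}}
    (h : #𝒜 = Cardinal.lift.{1} μ) :
    ∃ e : μ.out → (Ordinal → Ordinal), Set.range e = 𝒜 := by
  have hne : Nonempty (μ.out ≃ ↥𝒜) := by
    rw [← Cardinal.lift_mk_eq']
    rw [Cardinal.mk_out, h, Cardinal.lift_id']
  obtain ⟨ψ⟩ := hne
  refine ⟨fun x => (ψ x : Ordinal → Ordinal), ?_⟩
  ext a
  constructor
  · rintro ⟨x, rfl⟩; exact (ψ x).2
  · intro ha; exact ⟨ψ.symm ⟨a, ha⟩, by simp⟩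

lemma bounded_small_family {κ : Cardinal.{0}} (hreg : κ.IsRegular) {ι : Type}
    (e : ι → (Ordinal → Ordinal)) (hι : #ι < κ) (he : ∀ i, FunOn κ.ord (e i)) :
    ∃ g, FunOn κ.ord g ∧ ∀ i, ∀ β < κ.ord, e i β ≤ g β := by
  refine ⟨fun β => if hβ : β < κ.ord then ⨆ i, e i β else 0, ?_, ?_⟩
  · intro β hβ
    simp only [dif_pos hβ]
    exact Ordinal.iSup_lt_ord (by rw [hreg.cof_eq]; exact hι) (fun i => he i β hβ)
  · intro i β hβ
    simp only [dif_pos hβ]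
    exact le_ciSup (Ordinal.bddAbove_range _) i

noncomputable def seqF (pick : Ordinal → Set (Ordinal → Ordinal) → (Ordinal → Ordinal)) :
    Ordinal → (Ordinal → Ordinal) :=
  Ordinal.lt_wf.fix fun i rec => pick i {g | ∃ j, ∃ hj : j < i, rec j hj = g}

lemma seqF_eq (pick : Ordinal → Set (Ordinal → Ordinal) → (Ordinal → Ordinal)) (i : Ordinal) :
    seqF pick i = pick i {g | ∃ j, ∃ _ : j < i, seqF pick j = g} :=
  Ordinal.lt_wf.fix_eq _ i

end Stmt5Aux

/-- for a normal ultrafilter `U` on `κ`, `𝔱(U) ≤ 𝔟_κ`. -/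
theorem stmt5 (κ : Cardinal.{0}) (hreg : κ.IsRegular) (hunc : Cardinal.aleph0 < κ)
    (U : Set (Set Ordinal)) (hU : NormalUF κ.ord U) :
    tNum κ.ord U ≤ bNum κ.ord := by
  classical
  set K := κ.ord with hKdef
  have hKlim : Order.IsSuccLimit K := Cardinal.isSuccLimit_ord hreg.aleph0_le
  set S₀ : Set Cardinal.{0} :=
    { μ : Cardinal.{0} | ∃ 𝒜, UnboundedFunFam K 𝒜 ∧ #𝒜 = Cardinal.lift.{1} μ } with hS₀
  have hIioK : #(↥(Set.Iio K)) = Cardinal.lift.{1} κ := by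
    rw [Ordinal.mk_Iio_ordinal, Cardinal.card_ord]
  -- Step 1 : S₀ is nonempty
  have hne : S₀.Nonempty := by
    set Φ : ((↥(Set.Iio K)) → (↥(Set.Iio K))) → (Ordinal → Ordinal) :=
      fun p β => if hβ : β < K then (p ⟨β, hβ⟩ : Ordinal) else 0 with hΦ
    have hcard : #(↥(Set.range Φ)) ≤ Cardinal.lift.{1} (κ ^ κ) := by
      refine le_trans Cardinal.mk_range_le ?_
      rw [Cardinal.mk_arrow, hIioK, Cardinal.lift_id, Cardinal.lift_power]
    obtain ⟨μ, hμ⟩ := Cardinal.mem_range_lift_of_le hcard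
    refine ⟨μ, Set.range Φ, ⟨?_, ?_⟩, hμ.symm⟩
    · rintro f ⟨p, rfl⟩ β hβ
      simp only [hΦ, dif_pos hβ]
      exact (p ⟨β, hβ⟩).2
    · intro g hg
      set p0 : (↥(Set.Iio K)) → (↥(Set.Iio K)) :=
        fun x => ⟨Order.succ (g x), hKlim.succ_lt (hg x x.2)⟩ with hp0
      refine ⟨Φ p0, Set.mem_range_self p0, ?_⟩
      rintro ⟨α, hα, hle⟩
      have h2 := hle α le_rfl hα
      simp only [hΦ, hp0, dif_pos hα] at h2
      exact (Order.lt_succ (g α)).not_ge h2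
  set b := sInf S₀ with hbdef
  have hbNum : bNum K = b := rfl
  -- Step 2 : an unbounded family of size b
  have hbmem : b ∈ S₀ := csInf_mem hne
  obtain ⟨𝒜, h𝒜, h𝒜card⟩ := hbmem
  -- Step 3 : κ ≤ b
  have hκb : κ ≤ b := by
    refine le_csInf hne ?_
    intro μ hμ
    by_contra hlt
    push_neg at hlt
    obtain ⟨ℬ, hℬ, hℬcard⟩ := hμ
    obtain ⟨e, he⟩ := exists_enum hℬcard
    have hcard : #μ.out < κ := by rw [Cardinal.mk_out]; exact hlt
    obtain ⟨g, hg, hdom⟩ := bounded_small_family hreg e hcard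
      (fun i => hℬ.1 _ (he ▸ Set.mem_range_self i))
    obtain ⟨f, hf, hnle⟩ := hℬ.2 g hg
    rw [← he] at hf
    obtain ⟨i, rfl⟩ := hf
    exact hnle ⟨0, hKlim.pos, fun β _ hβ => hdom i β hβ⟩
  have hb0 : ℵ₀ ≤ b := hreg.aleph0_le.trans hκb
  have hblift : ℵ₀ ≤ Cardinal.lift.{1} b := Cardinal.aleph0_le_lift.mpr hb0
  -- Step 4 : families smaller than b are bounded
  have dom : ∀ s : Set (Ordinal → Ordinal), (∀ f ∈ s, FunOn K f) →
      #(↥s) < Cardinal.lift.{1} b → ∃ g, FunOn K g ∧ ∀ f ∈ s, LeStar K f g := by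
    intro s hsfun hscard
    obtain ⟨μ, hμb, hμcard⟩ := Cardinal.lt_lift_iff.mp hscard
    have hnmem : μ ∉ S₀ := notMem_of_lt_csInf' hμb
    have hnotun : ¬ UnboundedFunFam K s := fun h => hnmem ⟨s, h, hμcard.symm⟩
    rcases not_and_or.mp hnotun with h | h
    · exact absurd hsfun h
    · push_neg at h
      obtain ⟨g, hg, hgd⟩ := h
      exact ⟨g, hg, hgd⟩
  -- Step 5 : enumerate 𝒜 along ordinals below b.ord
  obtain ⟨e, he⟩ := exists_enum h𝒜card
  have hbt : Nonempty (b.ord.ToType ≃ b.out) := by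
    rw [← Cardinal.eq, Cardinal.mk_toType, Cardinal.card_ord, Cardinal.mk_out]
  obtain ⟨ψ⟩ := hbt
  set hEnum : Ordinal → (Ordinal → Ordinal) := fun j =>
    if hj : j < b.ord then e (ψ ((Ordinal.ToType.mk (o := b.ord)) ⟨j, hj⟩)) else fun _ => 0
    with hEnumdef
  have hEnum_mem : ∀ j, j < b.ord → hEnum j ∈ 𝒜 := by
    intro j hj
    simp only [hEnumdef, dif_pos hj]
    exact he ▸ Set.mem_range_self _
  have hEnum_surj : ∀ a ∈ 𝒜, ∃ j, ∃ _ : j < b.ord, hEnum j = a := by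
    intro a ha
    rw [← he] at ha
    obtain ⟨i, rfl⟩ := ha
    set x := (Ordinal.ToType.mk (o := b.ord)).symm (ψ.symm i) with hx
    have hx2 : (x : Ordinal) < b.ord := x.2
    refine ⟨x.1, hx2, ?_⟩
    simp only [hEnumdef]
    rw [dif_pos hx2]
    have hxx : (Ordinal.ToType.mk (o := b.ord)) ⟨x.1, hx2⟩ = ψ.symm i := by
      rw [show (⟨x.1, hx2⟩ : Set.Iio b.ord) = x from rfl, hx]
      exact OrderIso.apply_symm_apply _ _
    rw [hxx, Equiv.apply_symm_apply]
  -- Step 6 : the dominating scale F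
  set pick : Ordinal → Set (Ordinal → Ordinal) → (Ordinal → Ordinal) := fun j s =>
    if H : ∃ g, FunOn K g ∧ ∀ f ∈ insert (hEnum j) s, LeStar K f g then H.choose
    else fun _ => 0 with hpick
  set F := seqF pick with hF
  have hFeq : ∀ i, F i = pick i {g | ∃ j, ∃ _ : j < i, F j = g} := by
    intro i
    rw [hF]
    exact seqF_eq pick i
  have hspec : ∀ i, i < b.ord → FunOn K (F i) ∧ LeStar K (hEnum i) (F i) ∧
      ∀ j, j < i → LeStar K (F j) (F i) := by
    intro i
    induction i using Ordinal.induction with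
    | _ i IH =>
    intro hi
    have hprevsub : {g | ∃ j, ∃ _ : j < i, F j = g} ⊆ F '' Set.Iio i := by
      rintro g ⟨j, hj, rfl⟩; exact ⟨j, hj, rfl⟩
    have hprevcard : #(↥{g | ∃ j, ∃ _ : j < i, F j = g}) < Cardinal.lift.{1} b := by
      calc #(↥{g | ∃ j, ∃ _ : j < i, F j = g}) ≤ #(↥(F '' Set.Iio i)) :=
            Cardinal.mk_le_mk_of_subset hprevsub
        _ ≤ #(↥(Set.Iio i)) := Cardinal.mk_image_le
        _ = Cardinal.lift.{1} i.card := Ordinal.mk_Iio_ordinal i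
        _ < Cardinal.lift.{1} b := Cardinal.lift_lt.mpr (Cardinal.lt_ord.mp hi)
    have hfun : ∀ f ∈ insert (hEnum i) {g | ∃ j, ∃ _ : j < i, F j = g}, FunOn K f := by
      rintro f hf
      rcases Set.mem_insert_iff.mp hf with rfl | hf
      · exact h𝒜.1 _ (hEnum_mem i hi)
      · obtain ⟨j, hj, rfl⟩ := hf
        exact (IH j hj (hj.trans hi)).1
    have hcard2 : #(↥(insert (hEnum i) {g | ∃ j, ∃ _ : j < i, F j = g})) <
        Cardinal.lift.{1} b := by
      refine lt_of_le_of_lt Cardinal.mk_insert_le ?_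
      exact Cardinal.add_lt_of_lt hblift hprevcard
        (lt_of_lt_of_le Cardinal.one_lt_aleph0 hblift)
    have H : ∃ g, FunOn K g ∧
        ∀ f ∈ insert (hEnum i) {g | ∃ j, ∃ _ : j < i, F j = g}, LeStar K f g :=
      dom _ hfun hcard2
    have hFi : F i = H.choose := by
      rw [hFeq i]
      simp only [hpick]
      rw [dif_pos H]
    obtain ⟨hgfun, hgdom⟩ := H.choose_spec
    rw [← hFi] at hgfun hgdom
    exact ⟨hgfun, hgdom _ (Set.mem_insert _ _),
      fun j hj => hgdom _ (Set.mem_insert_of_mem _ ⟨j, hj, rfl⟩)⟩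
  -- Step 7 : the tower
  set S : Ordinal → Set Ordinal := fun i =>
    {β | β < K ∧ ∀ γ < β, β ∈ Set.Iio K ∩ Set.Ioi (F i γ)} with hSdef
  have hSU : ∀ i, i < b.ord → S i ∈ U := by
    intro i hi
    exact hU.2.2.2.2 (fun γ => Set.Iio K ∩ Set.Ioi (F i γ))
      (fun γ hγ => tail_mem hU hKlim ((hspec i hi).1 γ hγ))
  -- Step 8 : ⊆*-decreasing
  have hdec : ∀ i j, i < j → j < b.ord → AlmostSub K (S j) (S i) := by
    intro i j hij hj
    obtain ⟨α₀, hα₀, hmono⟩ := (hspec j hj).2.2 i hij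
    obtain ⟨δ, hδ, hδbd⟩ := sup_fun_lt hreg (hspec i (hij.trans hj)).1 hα₀
    refine ⟨max (Order.succ α₀) δ, max_lt (hKlim.succ_lt hα₀) hδ, ?_⟩
    rintro β ⟨hβK, hβS⟩ hβge
    refine ⟨hβK, fun γ hγ => ⟨hβK, ?_⟩⟩
    rcases lt_or_ge γ α₀ with hc | hc
    · exact lt_of_lt_of_le (hδbd γ hc) (le_trans (le_max_right _ _) hβge)
    · have hγK : γ < K := hγ.trans hβK
      exact lt_of_le_of_lt (hmono γ hc hγK) (hβS γ hγ).2
  -- Step 9 : no ⊆*-lower bound in U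
  have hnolb : ¬ ∃ Y ∈ U, ∀ i, i < b.ord → AlmostSub K Y (S i) := by
    rintro ⟨Y, hYU, hYsub⟩
    have hYK : Y ⊆ Set.Iio K := hU.1.toIsKFilter.subset _ hYU
    have hYunb := hU.2.1 _ hYU
    have hGne : ∀ β, β < K → ∃ y, y ∈ Y ∧ β < y := by
      intro β hβ
      obtain ⟨y, hy, hle⟩ := hYunb (Order.succ β) (hKlim.succ_lt hβ)
      exact ⟨y, hy, Order.succ_le_iff.mp hle⟩
    set g : Ordinal → Ordinal := fun β =>
      if hβ : β < K then sInf {y | y ∈ Y ∧ β < y} else 0 with hg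
    have hgmem : ∀ β, β < K → g β ∈ Y ∧ β < g β := by
      intro β hβ
      simp only [hg, dif_pos hβ]
      exact csInf_mem (hGne β hβ)
    have hgfun : FunOn K g := fun β hβ => hYK (hgmem β hβ).1
    obtain ⟨a, ha, hnle⟩ := h𝒜.2 g hgfun
    obtain ⟨j, hj, rfl⟩ := hEnum_surj a ha
    have hnleF : ¬ LeStar K (F j) g := fun hc =>
      hnle (leStar_trans (hspec j hj).2.1 hc)
    obtain ⟨α₁, hα₁, hsub⟩ := hYsub j hj
    rw [LeStar] at hnleF
    push_neg at hnleF
    obtain ⟨β, hβge, hβK, hβgt⟩ := hnleF α₁ hα₁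
    obtain ⟨hgY, hgβ⟩ := hgmem β hβK
    have hgS : g β ∈ S j := hsub _ hgY (le_trans hβge hgβ.le)
    exact absurd (hgS.2 β hgβ).2 hβgt.asymm
  -- Step 10 : b is regular
  have hcof : b ≤ b.ord.cof := by
    by_contra hc
    push_neg at hc
    obtain ⟨ι, fseq, hlsub, hcofcard⟩ := Ordinal.exists_lsub_cof b.ord
    have hTfun : ∀ f ∈ Set.range (fun x : ι => F (fseq x)), FunOn K f := by
      rintro f ⟨x, rfl⟩
      exact (hspec _ ((Ordinal.lt_lsub fseq x).trans_eq hlsub)).1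
    have hTcard : #(↥(Set.range (fun x : ι => F (fseq x)))) < Cardinal.lift.{1} b := by
      calc #(↥(Set.range (fun x : ι => F (fseq x))))
          = Cardinal.lift.{0} #(↥(Set.range (fun x : ι => F (fseq x)))) :=
            (Cardinal.lift_id' _).symm
        _ ≤ Cardinal.lift.{1} #ι := Cardinal.mk_range_le_lift
        _ = Cardinal.lift.{1} b.ord.cof := by rw [hcofcard]
        _ < Cardinal.lift.{1} b := Cardinal.lift_lt.mpr hc
    obtain ⟨g, hgfun, hgdom⟩ := dom _ hTfun hTcard
    obtain ⟨a, ha, hnle⟩ := h𝒜.2 g hgfun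
    obtain ⟨j, hj, rfl⟩ := hEnum_surj a ha
    obtain ⟨x, hx⟩ := Ordinal.lt_lsub_iff.mp (hlsub ▸ hj)
    have h1 : LeStar K (F j) (F (fseq x)) := by
      rcases lt_or_eq_of_le hx with h | h
      · exact (hspec _ ((Ordinal.lt_lsub fseq x).trans_eq hlsub)).2.2 j h
      · rw [h]; exact leStar_refl hKlim.pos _
    exact hnle (leStar_trans (hspec j hj).2.1
      (leStar_trans h1 (hgdom _ (Set.mem_range_self x))))
  have hbreg : b.IsRegular := ⟨hb0, hcof⟩
  -- Step 11 : conclude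
  rw [hbNum]
  refine csInf_le' ?_
  refine ⟨hbreg, S, hSU, hdec, ?_⟩
  intro hcon
  obtain ⟨Y, hYU, hYsub⟩ := hcon
  exact hnolb ⟨Y, hYU, fun i hi => hYsub i hi⟩

end PaperFormal
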